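/- arXiv:1704.08863 — 2 statements merged into one kernel-verified Lean document; each statement's English description precedes it below -/
import Mathlib

section
/- Let u > 0 and let μ be the Gaussian measure on ℝ with mean 0 and variance u². Then the variance of the function y ↦ max(y, 0) with respect to μ, namely ∫ (max(y,0))² dμ(y) − (∫ max(y,0) dμ(y))², equals u² (1/2 − 1/(2π)) = u² (π − 1)/(2π). -/
open MeasureTheory ProbabilityTheory NNReal Real Set Filter ENNReal

lemma exp_neg_mul_sq_tendsto {b : ℝ} (hb : 0 < b) :
    Tendsto (fun x : ℝ => Real.exp (-b * x ^ 2)) atTop (nhds 0) :=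
  Real.tendsto_exp_atBot.comp
    ((tendsto_pow_atTop two_ne_zero).const_mul_atTop_of_neg (neg_lt_zero.2 hb))

lemma mul_exp_neg_mul_sq_tendsto {b : ℝ} (hb : 0 < b) :
    Tendsto (fun x : ℝ => x * Real.exp (-b * x ^ 2)) atTop (nhds 0) := by
  have h := rpow_mul_exp_neg_mul_sq_isLittleO_exp_neg hb 1
  simp only [Real.rpow_one] at h
  have h2 : Tendsto (fun x : ℝ => Real.exp (-(1/2) * x)) atTop (nhds 0) :=
    Real.tendsto_exp_atBot.comp (tendsto_id.const_mul_atTop_of_neg (by norm_num))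
  exact h.trans_tendsto h2

lemma integral_mul_exp_neg_mul_sq_Ioi {b : ℝ} (hb : 0 < b) :
    ∫ x in Ioi (0:ℝ), x * Real.exp (-b * x ^ 2) = (2 * b)⁻¹ := by
  have hb2 : (2 : ℝ) * b ≠ 0 := by positivity
  have A : ∀ x ∈ Ici (0:ℝ), HasDerivAt (fun x : ℝ => -(2 * b)⁻¹ * Real.exp (-b * x ^ 2))
      (x * Real.exp (-b * x ^ 2)) x := by
    intro x _
    convert (((hasDerivAt_pow 2 x).const_mul (-b)).exp.const_mul (-(2 * b)⁻¹)) using 1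
    · rfl
    · rfl
    field_simp
    ring
  have B : Tendsto (fun x : ℝ => -(2 * b)⁻¹ * Real.exp (-b * x ^ 2)) atTop
      (nhds (-(2 * b)⁻¹ * 0)) := (exp_neg_mul_sq_tendsto hb).const_mul _
  have key := integral_Ioi_of_hasDerivAt_of_tendsto' A
    (integrable_mul_exp_neg_mul_sq hb).integrableOn B
  simpa using key

lemma integral_sq_mul_exp_neg_mul_sq_Ioi {b : ℝ} (hb : 0 < b) :
    ∫ x in Ioi (0:ℝ), x ^ 2 * Real.exp (-b * x ^ 2)
      = (2 * b)⁻¹ * (Real.sqrt (π / b) / 2) := by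
  have hb2 : (2 : ℝ) * b ≠ 0 := by positivity
  have hx2 : Integrable (fun x : ℝ => x ^ 2 * Real.exp (-b * x ^ 2)) := by
    have := integrable_rpow_mul_exp_neg_mul_sq hb (by norm_num : (-1:ℝ) < 2)
    have heq : ∀ x : ℝ, x ^ (2:ℝ) = x ^ 2 := fun x => by
      rw [show (2:ℝ) = ((2:ℕ):ℝ) by norm_num, Real.rpow_natCast]
    simpa only [heq] using this
  have hg : Integrable (fun x : ℝ => (2 * b)⁻¹ * Real.exp (-b * x ^ 2)) :=
    (integrable_exp_neg_mul_sq hb).const_mul _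
  have A : ∀ x ∈ Ici (0:ℝ), HasDerivAt (fun x : ℝ => -(2 * b)⁻¹ * x * Real.exp (-b * x ^ 2))
      (x ^ 2 * Real.exp (-b * x ^ 2) - (2 * b)⁻¹ * Real.exp (-b * x ^ 2)) x := by
    intro x _
    have := ((hasDerivAt_id x).const_mul (-(2 * b)⁻¹)).mul
      (((hasDerivAt_pow 2 x).const_mul (-b)).exp)
    convert this using 1
    · rfl
    · rfl
    · rfl
    field_simp
    simp only [id]
    ring
  have B : Tendsto (fun x : ℝ => -(2 * b)⁻¹ * x * Real.exp (-b * x ^ 2)) atTop (nhds 0) := by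
    have := (mul_exp_neg_mul_sq_tendsto hb).const_mul (-(2 * b)⁻¹)
    simp only [mul_zero] at this
    convert this using 2 with x
    ring
  have key := integral_Ioi_of_hasDerivAt_of_tendsto' A
    (hx2.sub hg).integrableOn B
  rw [integral_sub hx2.integrableOn hg.integrableOn] at key
  simp only [mul_zero, zero_mul, Real.exp_zero, mul_one, ne_eq, OfNat.ofNat_ne_zero,
    not_false_eq_true, zero_pow, sub_zero, neg_zero, zero_sub, neg_neg, sub_eq_zero] at key
  have : ∫ x in Ioi (0:ℝ), (2 * b)⁻¹ * Real.exp (-b * x ^ 2)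
      = (2 * b)⁻¹ * (Real.sqrt (π / b) / 2) := by
    rw [integral_const_mul _, integral_gaussian_Ioi]
  rw [← this, key]

lemma integral_gaussianReal_eq (v : ℝ≥0) (hv : v ≠ 0) (g : ℝ → ℝ) :
    ∫ y, g y ∂(gaussianReal 0 v) = ∫ y, gaussianPDFReal 0 v y * g y := by
  rw [gaussianReal_of_var_ne_zero 0 hv]
  have hd : gaussianPDF 0 v = fun x => ((gaussianPDFReal 0 v x).toNNReal : ℝ≥0∞) := rfl
  rw [hd, integral_withDensity_eq_integral_smul
    ((measurable_gaussianPDFReal 0 v).real_toNNReal) g]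
  congr 1
  ext x
  rw [NNReal.smul_def, smul_eq_mul, Real.coe_toNNReal _ (gaussianPDFReal_nonneg 0 v x)]

theorem relu_variance_gaussian (u : ℝ≥0) (hu : 0 < u) :
    (∫ y, (max y 0) ^ 2 ∂(gaussianReal 0 (u ^ 2))) -
      (∫ y, max y 0 ∂(gaussianReal 0 (u ^ 2))) ^ 2 =
      (u : ℝ) ^ 2 * ((Real.pi - 1) / (2 * Real.pi)) := by
  have hu' : (0:ℝ) < u := hu
  have hv : (u ^ 2 : ℝ≥0) ≠ 0 := pow_ne_zero 2 hu.ne'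
  set σ2 : ℝ := (u:ℝ) ^ 2 with hσ2def
  have hσ2 : 0 < σ2 := by positivity
  have hb : 0 < (2 * σ2)⁻¹ := by positivity
  have hpdf : ∀ x : ℝ, gaussianPDFReal 0 (u ^ 2) x
      = (Real.sqrt (2 * π * σ2))⁻¹ * Real.exp (-(2 * σ2)⁻¹ * x ^ 2) := by
    intro x
    rw [gaussianPDFReal]
    push_cast
    rw [sub_zero]
    congr 1
    rw [← hσ2def]
    field_simp
  have hcompl : ∀ (f : ℝ → ℝ), (∀ x : ℝ, x ∉ Ioi (0:ℝ) → gaussianPDFReal 0 (u ^ 2) x * f x = 0)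
      → True := fun _ _ => trivial
  -- first moment
  have h1 : ∫ y, gaussianPDFReal 0 (u ^ 2) y * max y 0
      = (Real.sqrt (2 * π * σ2))⁻¹ * σ2 := by
    rw [← setIntegral_eq_integral_of_forall_compl_eq_zero (s := Ioi (0:ℝ))
      (f := fun y => gaussianPDFReal 0 (u ^ 2) y * max y 0)]
    · rw [setIntegral_congr_fun measurableSet_Ioi
        (g := fun x => (Real.sqrt (2 * π * σ2))⁻¹ * (x * Real.exp (-(2 * σ2)⁻¹ * x ^ 2)))]
      · rw [integral_const_mul _, integral_mul_exp_neg_mul_sq_Ioi hb]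
        congr 1
        rw [mul_inv, inv_inv]
        field_simp
      · intro x hx
        dsimp only
        rw [hpdf x, max_eq_left (le_of_lt hx)]
        ring
    · intro x hx
      have hx' : x ≤ 0 := by simpa using hx
      rw [max_eq_right hx', mul_zero]
  -- second moment
  have h2 : ∫ y, gaussianPDFReal 0 (u ^ 2) y * (max y 0) ^ 2 = σ2 / 2 := by
    rw [← setIntegral_eq_integral_of_forall_compl_eq_zero (s := Ioi (0:ℝ))
      (f := fun y => gaussianPDFReal 0 (u ^ 2) y * (max y 0) ^ 2)]
    · rw [setIntegral_congr_fun measurableSet_Ioi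
        (g := fun x => (Real.sqrt (2 * π * σ2))⁻¹ * (x ^ 2 * Real.exp (-(2 * σ2)⁻¹ * x ^ 2)))]
      · rw [integral_const_mul _, integral_sq_mul_exp_neg_mul_sq_Ioi hb]
        have e1 : (2 * (2 * σ2)⁻¹)⁻¹ = σ2 := by field_simp
        have e2 : π / (2 * σ2)⁻¹ = 2 * π * σ2 := by field_simp
        rw [e1, e2]
        have hs : Real.sqrt (2 * π * σ2) ≠ 0 :=
          Real.sqrt_ne_zero'.mpr (by positivity)
        have hs2 : Real.sqrt (2 * π * σ2) * Real.sqrt (2 * π * σ2) = 2 * π * σ2 :=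
          Real.mul_self_sqrt (by positivity)
        field_simp
      · intro x hx
        dsimp only
        rw [hpdf x, max_eq_left (le_of_lt hx)]
        ring
    · intro x hx
      have hx' : x ≤ 0 := by simpa using hx
      rw [max_eq_right hx']
      simp
  rw [integral_gaussianReal_eq _ hv, integral_gaussianReal_eq _ hv, h1, h2]
  have hsq : Real.sqrt (2 * π * σ2) ^ 2 = 2 * π * σ2 :=
    Real.sq_sqrt (by positivity)
  have hs : Real.sqrt (2 * π * σ2) ≠ 0 := Real.sqrt_ne_zero'.mpr (by positivity)
  have hπ : π ≠ 0 := Real.pi_ne_zero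
  rw [mul_pow, inv_pow, hsq]
  field_simp
end

section
/- Let u > 0 and let μ be the Gaussian measure on ℝ with mean 0 and variance u². The variance of y ↦ max(y, 0) with respect to μ equals 1 if and only if u² = 2π/(π − 1). -/
open MeasureTheory ProbabilityTheory NNReal

open Real

lemma gaussianReal_integral_eq' (v : ℝ≥0) (hv : v ≠ 0) (f : ℝ → ℝ) :
    ∫ x, f x ∂(gaussianReal 0 v) = ∫ x, gaussianPDFReal 0 v x * f x := by
  rw [gaussianReal_of_var_ne_zero _ hv, gaussianPDF_def]
  have hmeas : Measurable (fun x => (gaussianPDFReal 0 v x).toNNReal) :=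
    measurable_real_toNNReal.comp (measurable_gaussianPDFReal 0 v)
  calc ∫ x, f x ∂(volume.withDensity fun x => ENNReal.ofReal (gaussianPDFReal 0 v x))
      = ∫ x, (gaussianPDFReal 0 v x).toNNReal • f x :=
        integral_withDensity_eq_integral_smul hmeas f
    _ = ∫ x, gaussianPDFReal 0 v x * f x := by
        congr 1 with x
        rw [NNReal.smul_def, smul_eq_mul, Real.coe_toNNReal _ (gaussianPDFReal_nonneg 0 v x)]

lemma relu_gauss_setint (v : ℝ≥0) (hv : 0 < v) (n : ℕ) (hn : 0 < n) :
    ∫ x, gaussianPDFReal 0 v x * (max x 0) ^ n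
      = (√(2 * π * (v:ℝ)))⁻¹ *
        (((2 * (v:ℝ))⁻¹) ^ (-((n:ℝ) + 1) / 2) * (1 / 2) * Gamma (((n:ℝ) + 1) / 2)) := by
  have hV : (0:ℝ) < (v:ℝ) := hv
  have h2V : (0:ℝ) < 2 * (v:ℝ) := by linarith
  have hb : (0:ℝ) < (2 * (v:ℝ))⁻¹ := by positivity
  have hind : (fun x => gaussianPDFReal 0 v x * (max x 0) ^ n)
      = (Set.Ioi (0:ℝ)).indicator
          (fun x => (√(2 * π * (v:ℝ)))⁻¹ * (x ^ (n:ℝ) * rexp (-(2 * (v:ℝ))⁻¹ * x ^ (2:ℝ)))) := by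
    ext x
    by_cases hx : 0 < x
    · rw [Set.indicator_of_mem (Set.mem_Ioi.mpr hx), gaussianPDFReal, max_eq_left hx.le,
        Real.rpow_natCast, show ((2:ℝ)) = ((2:ℕ):ℝ) by norm_num, Real.rpow_natCast]
      rw [mul_assoc]
      congr 1
      rw [mul_comm]
      congr 1
      field_simp
      rw [sub_zero]
    · push_neg at hx
      rw [Set.indicator_of_notMem (by simpa using hx), max_eq_right hx,
        zero_pow hn.ne', mul_zero]
  rw [hind, integral_indicator measurableSet_Ioi, MeasureTheory.integral_const_mul,
    integral_rpow_mul_exp_neg_mul_rpow two_pos (lt_of_lt_of_le (by norm_num) (Nat.cast_nonneg n)) hb]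

theorem relu_variance_eq_one_iff (u : ℝ≥0) (hu : 0 < u) :
    (∫ y, (max y 0) ^ 2 ∂(gaussianReal 0 (u ^ 2))) -
        (∫ y, max y 0 ∂(gaussianReal 0 (u ^ 2))) ^ 2 = 1 ↔
      (u : ℝ) ^ 2 = 2 * Real.pi / (Real.pi - 1) := by
  have hvne : u ^ 2 ≠ 0 := pow_ne_zero 2 hu.ne'
  have hv : (0:ℝ≥0) < u ^ 2 := by positivity
  set V : ℝ := (u:ℝ) ^ 2 with hVdef
  have hVc : ((u ^ 2 : ℝ≥0) : ℝ) = V := by push_cast; rfl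
  have hV : 0 < V := by positivity
  have h2V : 0 < 2 * V := by linarith
  have hsq1 : √(2 * V) ≠ 0 := (Real.sqrt_pos.mpr h2V).ne'
  have hsq2 : √π ≠ 0 := (Real.sqrt_pos.mpr Real.pi_pos).ne'
  have hI1 : ∫ y, max y 0 ∂(gaussianReal 0 (u ^ 2)) = (√(2 * π * V))⁻¹ * V := by
    rw [gaussianReal_integral_eq' _ hvne]
    have h := relu_gauss_setint (u ^ 2) hv 1 one_pos
    simp only [pow_one] at h
    rw [h, hVc, show (-(((1:ℕ):ℝ) + 1) / 2) = (-1 : ℝ) by norm_num, Real.rpow_neg_one, inv_inv,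
      show ((((1:ℕ):ℝ) + 1) / 2) = (1:ℝ) by norm_num, Real.Gamma_one]
    ring
  have hI2 : ∫ y, (max y 0) ^ 2 ∂(gaussianReal 0 (u ^ 2)) = V / 2 := by
    rw [gaussianReal_integral_eq' _ hvne, relu_gauss_setint (u ^ 2) hv 2 two_pos, hVc]
    have e1 : ((2 * V)⁻¹ : ℝ) ^ (-(((2:ℕ):ℝ) + 1) / 2) = (2 * V) * √(2 * V) := by
      rw [show (-(((2:ℕ):ℝ) + 1) / 2) = -(3 / 2 : ℝ) by norm_num,
        Real.inv_rpow h2V.le, Real.rpow_neg h2V.le, inv_inv,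
        show ((3:ℝ) / 2) = 1 + 1 / 2 by norm_num, Real.rpow_add h2V, Real.rpow_one,
        ← Real.sqrt_eq_rpow]
    have e2 : Real.Gamma ((((2:ℕ):ℝ) + 1) / 2) = √π / 2 := by
      rw [show ((((2:ℕ):ℝ) + 1) / 2) = 1 / 2 + 1 by norm_num,
        Real.Gamma_add_one (by norm_num), Real.Gamma_one_half_eq]
      ring
    have hsplit : √(2 * π * V) = √(2 * V) * √π := by
      rw [show 2 * π * V = (2 * V) * π by ring, Real.sqrt_mul h2V.le]
    rw [e1, e2, hsplit]
    rw [mul_inv]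
    field_simp
  rw [hI1, hI2]
  have hC2 : ((√(2 * π * V))⁻¹ * V) ^ 2 = V / (2 * π) := by
    rw [mul_pow, inv_pow, Real.sq_sqrt (by positivity)]
    field_simp [hV.ne']
  rw [hC2]
  have hπ1 : (0:ℝ) < π - 1 := by have := Real.pi_gt_three; linarith
  rw [show V / 2 - V / (2 * π) = V * (π - 1) / (2 * π) by field_simp,
    div_eq_one_iff_eq (by positivity : (2 * π : ℝ) ≠ 0)]
  constructor
  · intro h
    field_simp [hπ1.ne']
    linarith
  · intro h
    rw [h, div_mul_cancel₀ _ hπ1.ne']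
end
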